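/- Let n ≥ 11 and let ℱ be a maximum left-shifted independent set of flags of type {1,n−3} of [n]. Then the singleton {1} has ℱ-weight C(n−1,3); equivalently, every flag (A,B) ∈ ℱ satisfies 1 ∈ B. -/

import Mathlib

open Finset

/-- The ground set `[n] = {1,…,n}`. -/
def Iv (n : ℕ) : Finset ℕ := Finset.Icc 1 n

/-- A flag of type `{a,b}` of `[n]`: a pair `(A,B)` with `A ⊆ B ⊆ [n]`, `|A| = a`, `|B| = b`. -/
def IsFlag (n a b : ℕ) (f : Finset ℕ × Finset ℕ) : Prop :=
  f.1 ⊆ f.2 ∧ f.2 ⊆ Iv n ∧ f.1.card = a ∧ f.2.card = b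

/-- Opposition of flags `(A₁,B₁)`, `(A₂,B₂)`: `B₁ ∪ B₂ = [n]`, `A₁ ∩ B₂ = ∅`, `A₂ ∩ B₁ = ∅`. -/
def OppFlag (n : ℕ) (f g : Finset ℕ × Finset ℕ) : Prop :=
  f.2 ∪ g.2 = Iv n ∧ f.1 ∩ g.2 = ∅ ∧ g.1 ∩ f.2 = ∅

/-- An independent (EKR) set of flags: pairwise non-opposite. -/
def Indep (n : ℕ) (F : Finset (Finset ℕ × Finset ℕ)) : Prop :=
  ∀ f ∈ F, ∀ g ∈ F, ¬ OppFlag n f g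

/-- The `ℱ`-weight of a `b`-set `B`: the number of flags in `ℱ` with second component `B`. -/
def weightB (F : Finset (Finset ℕ × Finset ℕ)) (B : Finset ℕ) : ℕ :=
  (F.filter (fun f => f.2 = B)).card

/-- The `ℱ`-weight of an `a`-set `A`: the number of flags in `ℱ` with first component `A`. -/
def weightA (F : Finset (Finset ℕ × Finset ℕ)) (A : Finset ℕ) : ℕ :=
  (F.filter (fun f => f.1 = A)).card

/-- A maximal independent set of flags of type `{a,b}`. -/
def MaximalIndep (n a b : ℕ) (F : Finset (Finset ℕ × Finset ℕ)) : Prop :=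
  (∀ f ∈ F, IsFlag n a b f) ∧ Indep n F ∧
    (∀ f, IsFlag n a b f → Indep n (insert f F) → f ∈ F)

/-- The `i,j`-shift of a subset `A` of `[n]`. -/
def shift (i j : ℕ) (A : Finset ℕ) : Finset ℕ :=
  if i ∈ A ∧ j ∉ A then insert j (A.erase i) else A

/-- The `i,j`-shift of a flag, applied componentwise. -/
def shiftPair (i j : ℕ) (f : Finset ℕ × Finset ℕ) : Finset ℕ × Finset ℕ :=
  (shift i j f.1, shift i j f.2)

/-- The `i,j`-shift of a set of flags. -/
def shiftFamP (i j : ℕ) (F : Finset (Finset ℕ × Finset ℕ)) :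
    Finset (Finset ℕ × Finset ℕ) :=
  F.image (fun f => if shiftPair i j f ∈ F then f else shiftPair i j f)

/-- `F` is left-shifted: invariant under every shift `S_{i,j}` with `i ≥ j`. -/
def LeftShiftedP (n : ℕ) (F : Finset (Finset ℕ × Finset ℕ)) : Prop :=
  ∀ i ∈ Iv n, ∀ j ∈ Iv n, j ≤ i → shiftFamP i j F = F

namespace S15

variable {n : ℕ} {F : Finset (Finset ℕ × Finset ℕ)}

lemma mem_Iv {x n : ℕ} : x ∈ Iv n ↔ 1 ≤ x ∧ x ≤ n := by simp [Iv]

lemma card_Iv (n : ℕ) : (Iv n).card = n := by simp [Iv]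

/-- Structured membership: flag `({a}, [n] \ C)` is in `F`. -/
def Nice (n : ℕ) (F : Finset (Finset ℕ × Finset ℕ)) (a : ℕ) (C : Finset ℕ) : Prop :=
  a ∈ Iv n ∧ a ∉ C ∧ C ⊆ Iv n ∧ C.card = 3 ∧ ({a}, Iv n \ C) ∈ F

lemma shift_mem (hls : LeftShiftedP n F) {i j : ℕ} (hi : i ∈ Iv n) (hj : j ∈ Iv n)
    (hji : j ≤ i) {f} (hf : f ∈ F) : shiftPair i j f ∈ F := by
  have h := hls i hi j hj hji
  by_cases hc : shiftPair i j f ∈ F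
  · exact hc
  · have h2 : (if shiftPair i j f ∈ F then f else shiftPair i j f) ∈ shiftFamP i j F :=
      Finset.mem_image_of_mem _ hf
    rw [h, if_neg hc] at h2
    exact h2

/-- M1 : raise a complement element `c` to `i`. -/
lemma nice_raise (hls : LeftShiftedP n F) {a c i : ℕ} {C : Finset ℕ} (h : Nice n F a C)
    (hc : c ∈ C) (hi : i ∈ Iv n) (hci : c ≤ i) (hiC : i ∉ C) (hia : i ≠ a) :
    Nice n F a (insert i (C.erase c)) := by
  obtain ⟨ha, haC, hCIv, hC3, hmem⟩ := h
  have hcIv : c ∈ Iv n := hCIv hc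
  have hic : i ≠ c := fun h => hiC (h ▸ hc)
  have hB := shift_mem hls hi hcIv hci hmem
  have h1 : shift i c ({a} : Finset ℕ) = {a} := by
    rw [shift, if_neg]; rintro ⟨h1, _⟩
    exact hia (by simpa using h1)
  have h2 : shift i c (Iv n \ C) = Iv n \ insert i (C.erase c) := by
    rw [shift, if_pos ⟨by simp [Finset.mem_sdiff, hi, hiC], by simp [Finset.mem_sdiff, hc]⟩]
    ext x
    simp only [Finset.mem_insert, Finset.mem_erase, Finset.mem_sdiff]
    constructor
    · rintro (rfl | ⟨hxi, hxIv, hxC⟩)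
      · exact ⟨hcIv, by push_neg; exact ⟨fun h => absurd h.symm hic, fun h => absurd rfl h⟩⟩
      · exact ⟨hxIv, by push_neg; exact ⟨hxi, fun _ => hxC⟩⟩
    · rintro ⟨hxIv, hx⟩
      push_neg at hx
      obtain ⟨hxi, hx2⟩ := hx
      by_cases hxc : x = c
      · exact Or.inl hxc
      · exact Or.inr ⟨hxi, hxIv, hx2 hxc⟩
  constructor
  · exact ha
  refine ⟨?_, ?_, ?_, ?_⟩
  · simp only [Finset.mem_insert, Finset.mem_erase]
    push_neg
    exact ⟨fun h => hia h.symm, fun _ => haC⟩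
  · exact Finset.insert_subset hi ((Finset.erase_subset _ _).trans hCIv)
  · rw [Finset.card_insert_of_notMem (fun h => hiC (Finset.mem_of_mem_erase h)),
      Finset.card_erase_of_mem hc, hC3]
  · have : shiftPair i c ({a}, Iv n \ C) = ({a}, Iv n \ insert i (C.erase c)) := by
      simp [shiftPair, h1, h2]
    rwa [this] at hB

/-- M2 : lower the point `a` to `j`. -/
lemma nice_lower (hls : LeftShiftedP n F) {a j : ℕ} {C : Finset ℕ} (h : Nice n F a C)
    (hj : j ∈ Iv n) (hja : j ≤ a) (hjC : j ∉ C) (hne : j ≠ a) : Nice n F j C := by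
  obtain ⟨ha, haC, hCIv, hC3, hmem⟩ := h
  have hB := shift_mem hls ha hj hja hmem
  have h1 : shift a j ({a} : Finset ℕ) = {j} := by
    rw [shift, if_pos ⟨Finset.mem_singleton_self a, by simp [hne]⟩]
    simp
  have h2 : shift a j (Iv n \ C) = Iv n \ C := by
    rw [shift, if_neg]; rintro ⟨_, h2⟩
    exact h2 (Finset.mem_sdiff.2 ⟨hj, hjC⟩)
  refine ⟨hj, hjC, hCIv, hC3, ?_⟩
  have : shiftPair a j ({a}, Iv n \ C) = ({j}, Iv n \ C) := by
    simp [shiftPair, h1, h2]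
  rwa [this] at hB

/-- M3 : swap the point `a` with a complement element `j ≤ a`. -/
lemma nice_swap (hls : LeftShiftedP n F) {a j : ℕ} {C : Finset ℕ} (h : Nice n F a C)
    (hjC : j ∈ C) (hja : j ≤ a) : Nice n F j (insert a (C.erase j)) := by
  obtain ⟨ha, haC, hCIv, hC3, hmem⟩ := h
  have hjIv : j ∈ Iv n := hCIv hjC
  have hne : j ≠ a := fun h => haC (h ▸ hjC)
  have hB := shift_mem hls ha hjIv hja hmem
  have h1 : shift a j ({a} : Finset ℕ) = {j} := by
    rw [shift, if_pos ⟨Finset.mem_singleton_self a, by simp [hne]⟩]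
    simp
  have h2 : shift a j (Iv n \ C) = Iv n \ insert a (C.erase j) := by
    rw [shift, if_pos ⟨Finset.mem_sdiff.2 ⟨ha, haC⟩, fun h => (Finset.mem_sdiff.1 h).2 hjC⟩]
    ext x
    simp only [Finset.mem_insert, Finset.mem_erase, Finset.mem_sdiff]
    constructor
    · rintro (rfl | ⟨hxa, hxIv, hxC⟩)
      · exact ⟨hjIv, by push_neg; exact ⟨hne, fun h => absurd rfl h⟩⟩
      · exact ⟨hxIv, by push_neg; exact ⟨hxa, fun _ => hxC⟩⟩
    · rintro ⟨hxIv, hx⟩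
      push_neg at hx
      obtain ⟨hxa, hx2⟩ := hx
      by_cases hxj : x = j
      · exact Or.inl hxj
      · exact Or.inr ⟨hxa, hxIv, hx2 hxj⟩
  refine ⟨hjIv, ?_, ?_, ?_, ?_⟩
  · simp only [Finset.mem_insert, Finset.mem_erase]
    push_neg
    exact ⟨hne, fun h => absurd rfl h⟩
  · exact Finset.insert_subset ha ((Finset.erase_subset _ _).trans hCIv)
  · rw [Finset.card_insert_of_notMem (fun h => haC (Finset.mem_of_mem_erase h)),
      Finset.card_erase_of_mem hjC, hC3]
  · have : shiftPair a j ({a}, Iv n \ C) = ({j}, Iv n \ insert a (C.erase j)) := by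
      simp [shiftPair, h1, h2]
    rwa [this] at hB

/-- Core contradiction: two structured flags that are opposite. -/
lemma nice_opp (hindep : Indep n F) {a b : ℕ} {C₁ C₂ : Finset ℕ}
    (h1 : Nice n F a C₁) (h2 : Nice n F b C₂)
    (hd : C₁ ∩ C₂ = ∅) (ha : a ∈ C₂) (hb : b ∈ C₁) : False := by
  refine hindep _ h1.2.2.2.2 _ h2.2.2.2.2 ⟨?_, ?_, ?_⟩
  · ext x
    simp only [Finset.mem_union, Finset.mem_sdiff]
    constructor
    · rintro (⟨h, _⟩ | ⟨h, _⟩) <;> exact h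
    · intro hx
      by_cases hx1 : x ∈ C₁
      · refine Or.inr ⟨hx, fun hx2 => ?_⟩
        have : x ∈ C₁ ∩ C₂ := Finset.mem_inter.2 ⟨hx1, hx2⟩
        simp [hd] at this
      · exact Or.inl ⟨hx, hx1⟩
  · exact Finset.singleton_inter_of_notMem (by simp [Finset.mem_sdiff, ha])
  · exact Finset.singleton_inter_of_notMem (by simp [Finset.mem_sdiff, hb])

/-- Key lemma O: a "bad" flag `(b, C₁)` opposite to the swap-star of `(a, C₂)`. -/
lemma lemO (hindep : Indep n F) (hls : LeftShiftedP n F) {a b : ℕ} {C₁ C₂ : Finset ℕ}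
    (h1 : Nice n F b C₁) (h2 : Nice n F a C₂) (h11 : 1 ∈ C₁) (h12 : 1 ∈ C₂)
    (hd : C₁ ∩ insert a (C₂.erase 1) = ∅) (hb : b ∈ insert a (C₂.erase 1)) : False := by
  have hst : Nice n F 1 (insert a (C₂.erase 1)) := nice_swap hls h2 h12 (mem_Iv.1 h2.1).1
  exact nice_opp hindep h1 hst hd hb h11


/-- Lemma D: no two bad flags in `F` have disjoint supports. -/
lemma lemD (hn : 11 ≤ n) (hindep : Indep n F) (hls : LeftShiftedP n F)
    {a b : ℕ} {C₁ C₂ : Finset ℕ} (h1 : Nice n F a C₁) (h2 : Nice n F b C₂)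
    (h11 : 1 ∈ C₁) (h12 : 1 ∈ C₂) (hd : C₁ ∩ C₂ ⊆ {1}) : False := by
  have hdis12 : ∀ t, t ∈ C₁ → t ∈ C₂ → t = 1 := fun t ht1 ht2 => by
    have := hd (Finset.mem_inter.2 ⟨ht1, ht2⟩); simpa using this
  have hdis21 : ∀ t, t ∈ C₂ → t ∈ C₁ → t = 1 := fun t ht2 ht1 => hdis12 t ht1 ht2
  have ha1 : a ≠ 1 := fun h => h1.2.1 (h ▸ h11)
  have hb1 : b ≠ 1 := fun h => h2.2.1 (h ▸ h12)
  have haC₁ : a ∉ C₁ := h1.2.1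
  have hbC₂ : b ∉ C₂ := h2.2.1
  have hP2 : (C₁.erase 1).card = 2 := by
    rw [Finset.card_erase_of_mem h11, h1.2.2.2.1]
  have hQ2 : (C₂.erase 1).card = 2 := by
    rw [Finset.card_erase_of_mem h12, h2.2.2.2.1]
  -- the main contradiction generator
  have key : ∀ (x y : ℕ) (D₁ D₂ : Finset ℕ), Nice n F x D₁ → Nice n F y D₂ → 1 ∈ D₁ →
      1 ∈ D₂ → (∀ t, t ∈ D₁ → t ∈ D₂ → t = 1) → y ∉ D₁ →
      x ∈ insert y (D₂.erase 1) → False := by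
    intro x y D₁ D₂ n1 n2 m1 m2 hdis hy hx
    refine lemO hindep hls n1 n2 m1 m2 ?_ hx
    ext t
    simp only [Finset.mem_inter, Finset.mem_insert, Finset.mem_erase,
      Finset.notMem_empty, iff_false, not_and]
    rintro ht1 (rfl | ⟨htn1, ht2⟩)
    · exact hy ht1
    · exact htn1 (hdis t ht1 ht2)
  by_cases hbP : b = a ∨ b ∈ C₁.erase 1
  · by_cases haQ : a ∈ C₂.erase 1
    · -- residual-1 : a ∈ Q, b ∈ P
      have hba : b ≠ a := fun h => hbC₂ (h ▸ Finset.mem_of_mem_erase haQ)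
      have hbP' : b ∈ C₁.erase 1 := hbP.resolve_left hba
      by_cases hex : ∃ a' ∈ Finset.Icc 2 a, a' ∉ C₁.erase 1 ∧ a' ∉ C₂.erase 1
      · obtain ⟨a', ha'I, ha'P, ha'Q⟩ := hex
        have ha'b : 2 ≤ a' ∧ a' ≤ a := by simpa using ha'I
        have ha'Iv : a' ∈ Iv n := mem_Iv.2 ⟨by omega, le_trans ha'b.2 (mem_Iv.1 h1.1).2⟩
        have ha'C₁ : a' ∉ C₁ := fun h => ha'P (Finset.mem_erase.2 ⟨by omega, h⟩)
        have ha'a : a' ≠ a := fun h => ha'Q (h ▸ haQ)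
        have hlow : Nice n F a' C₁ := nice_lower hls h1 ha'Iv ha'b.2 ha'C₁ ha'a
        refine key b a' C₂ C₁ h2 hlow h12 h11 hdis21 ?_ ?_
        · intro h
          rcases (em (a' = 1)) with h' | h'
          · omega
          · exact ha'Q (Finset.mem_erase.2 ⟨h', h⟩)
        · exact Finset.mem_insert.2 (Or.inr hbP')
      · by_cases hexb : ∃ b' ∈ Finset.Icc 2 b, b' ∉ C₁.erase 1 ∧ b' ∉ C₂.erase 1
        · obtain ⟨b', hb'I, hb'P, hb'Q⟩ := hexb
          have hb'b : 2 ≤ b' ∧ b' ≤ b := by simpa using hb'I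
          have hb'Iv : b' ∈ Iv n := mem_Iv.2 ⟨by omega, le_trans hb'b.2 (mem_Iv.1 h2.1).2⟩
          have hb'C₂ : b' ∉ C₂ := fun h => hb'Q (Finset.mem_erase.2 ⟨by omega, h⟩)
          have hb'ne : b' ≠ b := fun h => hb'P (h ▸ hbP')
          have hlow : Nice n F b' C₂ := nice_lower hls h2 hb'Iv hb'b.2 hb'C₂ hb'ne
          refine key a b' C₁ C₂ h1 hlow h11 h12 hdis12 ?_ ?_
          · intro h
            rcases (em (b' = 1)) with h' | h'
            · omega
            · exact hb'P (Finset.mem_erase.2 ⟨h', h⟩)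
          · exact Finset.mem_insert.2 (Or.inr haQ)
        · -- a, b ≤ 5, raise a inside C₂ to a large A'
          push_neg at hex hexb
          have hsuba : Finset.Icc 2 a ⊆ C₁.erase 1 ∪ C₂.erase 1 := by
            intro x hx
            rcases em (x ∈ C₁.erase 1) with h | h
            · exact Finset.mem_union_left _ h
            · exact Finset.mem_union_right _ (hex x hx h)
          have hsubb : Finset.Icc 2 b ⊆ C₁.erase 1 ∪ C₂.erase 1 := by
            intro x hx
            rcases em (x ∈ C₁.erase 1) with h | h
            · exact Finset.mem_union_left _ h
            · exact Finset.mem_union_right _ (hexb x hx h)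
          have hcup : (C₁.erase 1 ∪ C₂.erase 1).card ≤ 4 := by
            have := Finset.card_union_le (C₁.erase 1) (C₂.erase 1)
            omega
          have ha5 : a ≤ 5 := by
            have h1' := Finset.card_le_card hsuba
            rw [Nat.card_Icc] at h1'
            omega
          have hb5 : b ≤ 5 := by
            have h1' := Finset.card_le_card hsubb
            rw [Nat.card_Icc] at h1'
            omega
          obtain ⟨A', hA'I, hA'P, hA'Q⟩ :
              ∃ x ∈ Finset.Icc 6 n, x ∉ C₁.erase 1 ∧ x ∉ C₂.erase 1 := by
            by_contra hcon
            push_neg at hcon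
            have hsub : Finset.Icc 6 n ⊆ C₁.erase 1 ∪ C₂.erase 1 := by
              intro x hx
              rcases em (x ∈ C₁.erase 1) with h | h
              · exact Finset.mem_union_left _ h
              · exact Finset.mem_union_right _ (hcon x hx h)
            have h1' := Finset.card_le_card hsub
            rw [Nat.card_Icc] at h1'
            omega
          have hA'6 : 6 ≤ A' ∧ A' ≤ n := by simpa using hA'I
          have haC₂mem : a ∈ C₂ := Finset.mem_of_mem_erase haQ
          have hA'Iv : A' ∈ Iv n := mem_Iv.2 ⟨by omega, hA'6.2⟩
          have hA'C₂ : A' ∉ C₂ := fun h => hA'Q (Finset.mem_erase.2 ⟨by omega, h⟩)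
          have hraise : Nice n F b (insert A' (C₂.erase a)) :=
            nice_raise hls h2 haC₂mem hA'Iv (by omega) hA'C₂ (by omega)
          have h1C₂' : 1 ∈ insert A' (C₂.erase a) :=
            Finset.mem_insert.2 (Or.inr (Finset.mem_erase.2 ⟨Ne.symm ha1, h12⟩))
          refine key b a (insert A' (C₂.erase a)) C₁ hraise h1 h1C₂' h11 ?_ ?_ ?_
          · intro t ht htC₁
            rcases Finset.mem_insert.1 ht with rfl | ht'
            · exfalso
              exact hA'P (Finset.mem_erase.2 ⟨by omega, htC₁⟩)
            · exact hdis21 t (Finset.mem_of_mem_erase ht') htC₁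
          · intro h
            rcases Finset.mem_insert.1 h with h' | h'
            · omega
            · exact (Finset.mem_erase.1 h').1 rfl
          · exact Finset.mem_insert.2 (Or.inr hbP')
    · -- a ∉ Q ; first key applies when b ∈ insert a P
      have haC₂ : a ∉ C₂ := fun h => haQ (Finset.mem_erase.2 ⟨ha1, h⟩)
      refine key b a C₂ C₁ h2 h1 h12 h11 hdis21 haC₂ ?_
      rcases hbP with h | h
      · exact Finset.mem_insert.2 (Or.inl h)
      · exact Finset.mem_insert.2 (Or.inr h)
  · -- b ∉ insert a P
    push_neg at hbP
    have hbC₁ : b ∉ C₁ := fun h => hbP.2 (Finset.mem_erase.2 ⟨hb1, h⟩)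
    by_cases haQ2 : a ∈ C₂.erase 1
    · exact key a b C₁ C₂ h1 h2 h11 h12 hdis12 hbC₁
        (Finset.mem_insert.2 (Or.inr haQ2))
    · -- residual-2
      have haC₂ : a ∉ C₂ := fun h => haQ2 (Finset.mem_erase.2 ⟨ha1, h⟩)
      rcases le_or_gt a b with hab | hba
      · have hlow : Nice n F a C₂ := nice_lower hls h2 h1.1 hab haC₂ (Ne.symm hbP.1)
        exact key a a C₂ C₁ hlow h1 h12 h11 hdis21 haC₂ (Finset.mem_insert.2 (Or.inl rfl))
      · have hlow : Nice n F b C₁ :=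
          nice_lower hls h1 h2.1 (le_of_lt hba) hbC₁ hbP.1
        exact key b b C₁ C₂ hlow h2 h11 h12 hdis12 hbC₁ (Finset.mem_insert.2 (Or.inl rfl))

/-- If `(a, C)` is a bad flag (1 ∈ C) with `n ∉ C`, then `C = {1, n-2, n-1}`. -/
lemma lemTop (hn : 11 ≤ n) (hindep : Indep n F) (hls : LeftShiftedP n F)
    {a : ℕ} {C : Finset ℕ} (h : Nice n F a C) (h1C : 1 ∈ C) (hnC : n ∉ C) :
    C = {1, n-2, n-1} := by
  have hC3 := h.2.2.2.1
  have hCIv := h.2.2.1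
  have haIv := mem_Iv.1 h.1
  have hP2 : (C.erase 1).card = 2 := by rw [Finset.card_erase_of_mem h1C, hC3]
  -- an owner ≤ 5 of the same complement
  obtain ⟨a₀, ha₀5, h₀⟩ : ∃ a₀, a₀ ≤ 5 ∧ Nice n F a₀ C := by
    by_cases ha5 : a ≤ 5
    · exact ⟨a, ha5, h⟩
    · obtain ⟨x, hxI, hxC⟩ : ∃ x ∈ ({2,3,4,5} : Finset ℕ), x ∉ C := by
        by_contra hcon
        push_neg at hcon
        have hsub : ({2,3,4,5} : Finset ℕ) ⊆ C := fun x hx => hcon x hx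
        have := Finset.card_le_card hsub
        simp [hC3] at this
      have hxb : x = 2 ∨ x = 3 ∨ x = 4 ∨ x = 5 := by simpa using hxI
      have hx5 : 2 ≤ x ∧ x ≤ 5 := by omega
      refine ⟨x, hx5.2, nice_lower hls h (mem_Iv.2 ⟨by omega, by omega⟩) (by omega) hxC
        (by omega)⟩
  have claim : C.erase 1 ⊆ {n-2, n-1} := by
    intro w hw
    by_contra hwbad
    have hw1 : w ≠ 1 := (Finset.mem_erase.1 hw).1
    have hwC : w ∈ C := Finset.mem_of_mem_erase hw
    have hwIv := mem_Iv.1 (hCIv hwC)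
    have hwn : w ≠ n := fun hh => hnC (hh ▸ hwC)
    have hwb : w ≤ n - 3 := by
      simp only [Finset.mem_insert, Finset.mem_singleton] at hwbad
      omega
    -- the other element
    obtain ⟨w', hw'⟩ : ∃ w', (C.erase 1).erase w = {w'} := by
      apply Finset.card_eq_one.1
      rw [Finset.card_erase_of_mem hw, hP2]
    have hw'mem : w' ∈ (C.erase 1).erase w := hw' ▸ Finset.mem_singleton_self w'
    have hw'w : w' ≠ w := (Finset.mem_erase.1 hw'mem).1
    have hw'1 : w' ≠ 1 := (Finset.mem_erase.1 (Finset.mem_of_mem_erase hw'mem)).1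
    have hw'C : w' ∈ C := Finset.mem_of_mem_erase (Finset.mem_of_mem_erase hw'mem)
    have hw'Iv := mem_Iv.1 (hCIv hw'C)
    have hw'n : w' ≠ n := fun hh => hnC (hh ▸ hw'C)
    -- C = {1, w, w'}
    have hCeq : ({1, w, w'} : Finset ℕ) = C := by
      apply Finset.eq_of_subset_of_card_le
      · intro x hx
        simp only [Finset.mem_insert, Finset.mem_singleton] at hx
        rcases hx with rfl | rfl | rfl
        · exact h1C
        · exact hwC
        · exact hw'C
      · rw [hC3]
        have : ({1, w, w'} : Finset ℕ).card = 3 := by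
          rw [Finset.card_insert_of_notMem (by simp [Ne.symm hw1, Ne.symm hw'1]),
            Finset.card_insert_of_notMem (by simp [Ne.symm hw'w]), Finset.card_singleton]
        omega
    have final : ∀ x' : ℕ, (x' = n-1 ∨ x' = n-2) → x' ≠ w' → False := by
      intro x' hx'or hx'w'
      have hx'b : n - 2 ≤ x' ∧ x' ≤ n - 1 := by omega
      -- raise w' → n
      have hC1 : Nice n F a₀ (insert n (C.erase w')) :=
        nice_raise hls h₀ hw'C (mem_Iv.2 ⟨by omega, le_refl n⟩) (by omega) hnC (by omega)
      have hwmem1 : w ∈ insert n (C.erase w') :=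
        Finset.mem_insert.2 (Or.inr (Finset.mem_erase.2 ⟨fun hh => hw'w hh.symm, hwC⟩))
      have hx'notC : x' ∉ C := by
        intro hx'C
        have : x' ∈ ({1, w, w'} : Finset ℕ) := hCeq ▸ hx'C
        simp only [Finset.mem_insert, Finset.mem_singleton] at this
        rcases this with h' | h' | h'
        · omega
        · omega
        · exact hx'w' h'
      have hC2 : Nice n F a₀ (insert x' ((insert n (C.erase w')).erase w)) := by
        refine nice_raise hls hC1 hwmem1 (mem_Iv.2 ⟨by omega, by omega⟩) (by omega) ?_
          (by omega)
        intro hx'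
        rcases Finset.mem_insert.1 hx' with h' | h'
        · omega
        · exact hx'notC (Finset.mem_of_mem_erase h')
      refine lemD hn hindep hls h hC2 h1C ?_ ?_
      · refine Finset.mem_insert.2 (Or.inr ?_)
        refine Finset.mem_erase.2 ⟨Ne.symm hw1, ?_⟩
        refine Finset.mem_insert.2 (Or.inr (Finset.mem_erase.2 ⟨Ne.symm hw'1, h1C⟩))
      · intro t ht
        have ht1 := Finset.mem_inter.1 ht
        have htC : t ∈ ({1, w, w'} : Finset ℕ) := hCeq ▸ ht1.1
        have htC2 := ht1.2
        simp only [Finset.mem_insert, Finset.mem_singleton] at htC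
        rcases htC with rfl | rfl | rfl
        · exact Finset.mem_singleton_self 1
        · exfalso
          rcases Finset.mem_insert.1 htC2 with h' | h'
          · omega
          · exact (Finset.mem_erase.1 h').1 rfl
        · exfalso
          rcases Finset.mem_insert.1 htC2 with h' | h'
          · exact hx'w' h'.symm
          · have h'' := Finset.mem_of_mem_erase h'
            rcases Finset.mem_insert.1 h'' with h3 | h3
            · exact hw'n h3
            · exact (Finset.mem_erase.1 h3).1 rfl
    rcases em (w' = n - 2) with hcase | hcase
    · exact final (n-1) (Or.inl rfl) (by omega)
    · exact final (n-2) (Or.inr rfl) (fun hh => hcase hh.symm)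
  have hPeq : C.erase 1 = {n-2, n-1} := by
    apply Finset.eq_of_subset_of_card_le claim
    rw [hP2]
    have : ({n-2, n-1} : Finset ℕ).card ≤ 2 := Finset.card_insert_le _ _ |>.trans (by simp)
    omega
  have h5 := Finset.insert_erase h1C
  rw [hPeq] at h5
  exact h5.symm

lemma pascal3 (u : ℕ) : ∀ k, k ≤ u →
    Nat.choose u 3 = Nat.choose (u-k) 3 + ∑ i ∈ Finset.Icc 1 k, Nat.choose (u-i) 2 := by
  intro k
  induction k with
  | zero => simp
  | succ k ih =>
    intro hk
    have h1 := ih (by omega)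
    rw [Finset.sum_Icc_succ_top (by omega : 1 ≤ k+1)]
    have h2 : u - k = (u - (k+1)) + 1 := by omega
    have h3 : Nat.choose (u-k) 3 = Nat.choose (u-(k+1)) 2 + Nat.choose (u-(k+1)) 3 := by
      rw [h2]; exact Nat.choose_succ_succ _ 2
    omega

lemma lemC {u c k : ℕ} (hk1 : 1 ≤ k) (hku : k ≤ u)
    (h3 : c < Nat.choose (u-1) 2) (h4 : u * c < Nat.choose u 3) :
    Nat.choose (u-k) 3 + k * c < Nat.choose u 3 := by
  rcases Nat.lt_or_ge (Nat.choose (u-k) 2) c with hcase | hcase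
  · have hb : Nat.choose (u-k) 3 ≤ (u-k) * c := by
      have hp := pascal3 (u-k) (u-k) le_rfl
      have hz : (u-k) - (u-k) = 0 := by omega
      rw [hz] at hp
      have hzero : Nat.choose 0 3 = 0 := by simp
      have hsum : ∑ i ∈ Finset.Icc 1 (u-k), Nat.choose (u-k-i) 2 ≤ (u-k) * c := by
        calc ∑ i ∈ Finset.Icc 1 (u-k), Nat.choose (u-k-i) 2
            ≤ ∑ _i ∈ Finset.Icc 1 (u-k), c :=
              Finset.sum_le_sum (fun i _hi =>
                le_of_lt (lt_of_le_of_lt (Nat.choose_le_choose 2 (by omega)) hcase))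
          _ = (u-k) * c := by
              rw [Finset.sum_const, Nat.card_Icc, smul_eq_mul, Nat.add_sub_cancel]
      omega
    have heq : (u-k) * c + k * c = u * c := by
      rw [← Nat.add_mul]
      congr 1
      omega
    omega
  · rw [pascal3 u k hku]
    have hlt : k * c < ∑ i ∈ Finset.Icc 1 k, Nat.choose (u-i) 2 := by
      obtain ⟨k', rfl⟩ : ∃ k', k = k' + 1 := ⟨k - 1, by omega⟩
      have hsplit : Finset.Icc 1 (k'+1) = insert 1 (Finset.Icc 2 (k'+1)) := by
        ext x
        simp only [Finset.mem_Icc, Finset.mem_insert]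
        omega
      rw [hsplit, Finset.sum_insert (by simp)]
      have h2 : ∑ _i ∈ Finset.Icc 2 (k'+1), c ≤ ∑ i ∈ Finset.Icc 2 (k'+1), Nat.choose (u-i) 2 :=
        Finset.sum_le_sum (fun i hi => by
          have hib : 2 ≤ i ∧ i ≤ k' + 1 := by simpa using hi
          exact le_trans hcase (Nat.choose_le_choose 2 (by omega)))
      rw [Finset.sum_const, Nat.card_Icc, smul_eq_mul] at h2
      have hcc : (k' + 1 + 1 - 2) = k' := by omega
      rw [hcc] at h2
      have hm : (k' + 1) * c = k' * c + c := by ring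
      omega
    omega

lemma hit_count (U : Finset ℕ) (p : ℕ → Prop) [DecidablePred p] :
    ((Finset.powersetCard 3 U).filter (fun S => ∃ a ∈ S, p a)).card
      + Nat.choose ((U.filter (fun a => ¬ p a)).card) 3 = Nat.choose U.card 3 := by
  classical
  have h1 : (Finset.powersetCard 3 U).filter (fun S => ¬ ∃ a ∈ S, p a)
      = Finset.powersetCard 3 (U.filter (fun a => ¬ p a)) := by
    ext S
    simp only [Finset.mem_filter, Finset.mem_powersetCard, not_exists, not_and]
    constructor
    · rintro ⟨⟨hsub, hcard⟩, hnp⟩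
      exact ⟨fun x hx => Finset.mem_filter.2 ⟨hsub hx, hnp x hx⟩, hcard⟩
    · rintro ⟨hsub, hcard⟩
      exact ⟨⟨fun x hx => (Finset.mem_filter.1 (hsub hx)).1, hcard⟩,
        fun x hx => (Finset.mem_filter.1 (hsub hx)).2⟩
  have h2 := Finset.card_filter_add_card_filter_not
    (s := Finset.powersetCard 3 U) (p := fun S => ∃ a ∈ S, p a)
  rw [h1, Finset.card_powersetCard, Finset.card_powersetCard] at h2
  omega

lemma two_choose_two' (m : ℕ) : 2 * Nat.choose (m+2) 2 = (m+2) * (m+1) := by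
  induction m with
  | zero => decide
  | succ m ih =>
    have h : Nat.choose (m+1+2) 2 = Nat.choose (m+2) 1 + Nat.choose (m+2) 2 :=
      Nat.choose_succ_succ (m+2) 1
    rw [h, Nat.choose_one_right]
    nlinarith [ih]

lemma six_choose_three' (m : ℕ) : 6 * Nat.choose (m+3) 3 = (m+3)*(m+2)*(m+1) := by
  induction m with
  | zero => decide
  | succ m ih =>
    have h : Nat.choose (m+1+3) 3 = Nat.choose (m+3) 2 + Nat.choose (m+3) 3 :=
      Nat.choose_succ_succ (m+3) 2
    have h2 : 2 * Nat.choose (m+3) 2 = (m+3)*(m+2) := two_choose_two' (m+1)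
    rw [h]
    nlinarith [ih, h2]

/-- master inequality, case I : `C(n-2-k,3) + k(n-3) < C(n-2,3)` for `1 ≤ k ≤ n-2`. -/
lemma masterI {n k : ℕ} (hn : 11 ≤ n) (hk1 : 1 ≤ k) (hk : k ≤ n - 2) :
    Nat.choose (n-2-k) 3 + k * (n-3) < Nat.choose (n-2) 3 := by
  obtain ⟨m, rfl⟩ : ∃ m, n = m + 11 := ⟨n - 11, by omega⟩
  have e1 : m + 11 - 2 = m + 9 := by omega
  have e2 : m + 11 - 3 = m + 8 := by omega
  rw [e1, e2]
  refine lemC hk1 (by omega) ?_ ?_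
  · have e3 : m + 9 - 1 = m + 8 := by omega
    rw [e3]
    have h : 2 * Nat.choose (m+8) 2 = (m+8)*(m+7) := two_choose_two' (m+6)
    nlinarith
  · have h : 6 * Nat.choose (m+9) 3 = (m+9)*(m+8)*(m+7) := six_choose_three' (m+6)
    nlinarith

/-- master inequality, case II : `C(n-4-k,3) + 3k < C(n-4,3)` for `1 ≤ k ≤ n-4`. -/
lemma masterII {n k : ℕ} (hn : 11 ≤ n) (hk1 : 1 ≤ k) (hk : k ≤ n - 4) :
    Nat.choose (n-4-k) 3 + k * 3 < Nat.choose (n-4) 3 := by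
  obtain ⟨m, rfl⟩ : ∃ m, n = m + 11 := ⟨n - 11, by omega⟩
  have e1 : m + 11 - 4 = m + 7 := by omega
  rw [e1]
  refine lemC hk1 (by omega) ?_ ?_
  · have e3 : m + 7 - 1 = m + 6 := by omega
    rw [e3]
    have h : 2 * Nat.choose (m+6) 2 = (m+6)*(m+5) := two_choose_two' (m+4)
    nlinarith
  · have h : 6 * Nat.choose (m+7) 3 = (m+7)*(m+6)*(m+5) := six_choose_three' (m+4)
    have h18 : 18 < (m+6)*(m+5) := by nlinarith
    have hmul : (m+7) * 18 < (m+7) * ((m+6)*(m+5)) :=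
      Nat.mul_lt_mul_of_pos_left h18 (by omega)
    have hassoc : (m+7)*((m+6)*(m+5)) = (m+7)*(m+6)*(m+5) := (mul_assoc _ _ _).symm
    linarith

lemma choose2_ge {n : ℕ} (hn : 11 ≤ n) : 2 ≤ Nat.choose (n-4) 2 := by
  obtain ⟨m, rfl⟩ : ∃ m, n = m + 11 := ⟨n - 11, by omega⟩
  have e1 : m + 11 - 4 = m + 7 := by omega
  rw [e1]
  have h : 2 * Nat.choose (m+7) 2 = (m+7)*(m+6) := two_choose_two' (m+5)
  nlinarith

/-- Common finisher: a set `K` of killed star-complements larger than the bad part of `F`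
contradicts maximality. -/
lemma finisher (hn : 11 ≤ n) (hflags : ∀ f ∈ F, IsFlag n 1 (n-3) f)
    (hindep : Indep n F)
    (hmax : ∀ G : Finset (Finset ℕ × Finset ℕ),
      (∀ g ∈ G, IsFlag n 1 (n-3) g) → Indep n G → G.card ≤ F.card)
    (K : Finset (Finset ℕ)) (hK1 : ∀ S ∈ K, S ⊆ (Iv n).erase 1 ∧ S.card = 3)
    (hK2 : ∀ S ∈ K, (({1} : Finset ℕ), Iv n \ S) ∉ F)
    (hKcard : (F.filter (fun f => 1 ∉ f.2)).card < K.card) : False := by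
  classical
  set G := F.filter (fun f => 1 ∈ f.2) ∪ K.image (fun S => (({1} : Finset ℕ), Iv n \ S))
    with hG
  have h1Iv : (1:ℕ) ∈ Iv n := mem_Iv.2 ⟨le_refl 1, by omega⟩
  have hstar : ∀ S ∈ K, IsFlag n 1 (n-3) (({1} : Finset ℕ), Iv n \ S) := by
    intro S hS
    obtain ⟨hsub, hcard⟩ := hK1 S hS
    have hSIv : S ⊆ Iv n := hsub.trans (Finset.erase_subset _ _)
    have h1S : (1:ℕ) ∉ S := fun h => (Finset.mem_erase.1 (hsub h)).1 rfl
    refine ⟨?_, Finset.sdiff_subset, Finset.card_singleton 1, ?_⟩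
    · intro x hx
      rw [Finset.mem_singleton] at hx
      subst hx
      exact Finset.mem_sdiff.2 ⟨h1Iv, h1S⟩
    · rw [Finset.card_sdiff_of_subset hSIv, card_Iv, hcard]
  have hGflag : ∀ g ∈ G, IsFlag n 1 (n-3) g := by
    intro g hg
    rcases Finset.mem_union.1 hg with h | h
    · exact hflags g (Finset.mem_of_mem_filter g h)
    · obtain ⟨S, hS, rfl⟩ := Finset.mem_image.1 h
      exact hstar S hS
  have hGone : ∀ g ∈ G, 1 ∈ g.2 := by
    intro g hg
    rcases Finset.mem_union.1 hg with h | h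
    · exact (Finset.mem_filter.1 h).2
    · obtain ⟨S, hS, rfl⟩ := Finset.mem_image.1 h
      exact Finset.mem_sdiff.2 ⟨h1Iv, fun h' => (Finset.mem_erase.1 ((hK1 S hS).1 h')).1 rfl⟩
  have hGindep : Indep n G := by
    intro f hf g hg hopp
    rcases Finset.mem_union.1 hf with h | h
    · rcases Finset.mem_union.1 hg with h' | h'
      · exact hindep f (Finset.mem_of_mem_filter f h) g (Finset.mem_of_mem_filter g h') hopp
      · obtain ⟨S, hS, rfl⟩ := Finset.mem_image.1 h'
        have h1f : 1 ∈ f.2 := (Finset.mem_filter.1 h).2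
        have hc := hopp.2.2
        rw [Finset.singleton_inter_of_mem h1f] at hc
        simp at hc
    · obtain ⟨S, hS, rfl⟩ := Finset.mem_image.1 h
      have h1g : 1 ∈ g.2 := hGone g hg
      have hc := hopp.2.1
      rw [Finset.singleton_inter_of_mem h1g] at hc
      simp at hc
  have hcard := hmax G hGflag hGindep
  have hdisj : Disjoint (F.filter (fun f => 1 ∈ f.2))
      (K.image (fun S => (({1} : Finset ℕ), Iv n \ S))) := by
    rw [Finset.disjoint_left]
    intro g hgf hgi
    obtain ⟨S, hS, rfl⟩ := Finset.mem_image.1 hgi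
    exact hK2 S hS (Finset.mem_of_mem_filter _ hgf)
  have hinj : Set.InjOn (fun S => (({1} : Finset ℕ), Iv n \ S)) K := by
    intro S hS S' hS' hEq
    have h2 : Iv n \ S = Iv n \ S' := congrArg Prod.snd hEq
    have hSIv : S ⊆ Iv n := ((hK1 S hS).1).trans (Finset.erase_subset _ _)
    have hS'Iv : S' ⊆ Iv n := ((hK1 S' hS').1).trans (Finset.erase_subset _ _)
    have h3 := congrArg (fun t => Iv n \ t) h2
    simpa [Finset.sdiff_sdiff_eq_self hSIv, Finset.sdiff_sdiff_eq_self hS'Iv] using h3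
  have hGcard : G.card = (F.filter (fun f => 1 ∈ f.2)).card + K.card := by
    rw [hG, Finset.card_union_of_disjoint hdisj, Finset.card_image_of_injOn hinj]
  have hsplit := Finset.card_filter_add_card_filter_not
    (s := F) (p := fun f => (1:ℕ) ∈ f.2)
  have hsame : F.filter (fun f => ¬ (1:ℕ) ∈ f.2) = F.filter (fun f => (1:ℕ) ∉ f.2) := rfl
  rw [hsame] at hsplit
  omega

/-- Case I: all bad flags have `n` in their complement. -/
lemma countI (hn : 11 ≤ n) (hflags : ∀ f ∈ F, IsFlag n 1 (n-3) f)
    (hindep : Indep n F) (hls : LeftShiftedP n F)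
    (hmax : ∀ G : Finset (Finset ℕ × Finset ℕ),
      (∀ g ∈ G, IsFlag n 1 (n-3) g) → Indep n G → G.card ≤ F.card)
    (HC1 : ∀ f ∈ F, 1 ∉ f.2 → n ∉ f.2)
    (hne : ∃ f ∈ F, 1 ∉ f.2) : False := by
  classical
  set U := Finset.Icc 2 (n-1) with hU
  set W : ℕ → Finset ℕ :=
    fun a => U.filter (fun w => (({a} : Finset ℕ), Iv n \ {1, w, n}) ∈ F) with hWdef
  set A := U.filter (fun a => (W a).Nonempty) with hA
  have hUcard : U.card = n - 2 := by rw [hU, Nat.card_Icc]; omega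
  -- structure of bad flags
  have hstruct : ∀ f ∈ F, 1 ∉ f.2 →
      ∃ a w, a ∈ U ∧ w ∈ W a ∧ f = (({a} : Finset ℕ), Iv n \ {1, w, n}) := by
    intro f hf h1f
    obtain ⟨hAB, hBIv, hA1, hB⟩ := hflags f hf
    obtain ⟨a, ha⟩ := Finset.card_eq_one.1 hA1
    have haB : a ∈ f.2 := hAB (ha ▸ Finset.mem_singleton_self a)
    have hC3 : (Iv n \ f.2).card = 3 := by
      rw [Finset.card_sdiff_of_subset hBIv, card_Iv, hB]; omega
    have h1C : 1 ∈ Iv n \ f.2 :=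
      Finset.mem_sdiff.2 ⟨mem_Iv.2 ⟨le_refl 1, by omega⟩, h1f⟩
    have hnC : n ∈ Iv n \ f.2 :=
      Finset.mem_sdiff.2 ⟨mem_Iv.2 ⟨by omega, le_refl n⟩, HC1 f hf h1f⟩
    have h1n : (1:ℕ) ≠ n := by omega
    have hsub : ({1, n} : Finset ℕ) ⊆ Iv n \ f.2 := by
      intro x hx
      simp only [Finset.mem_insert, Finset.mem_singleton] at hx
      rcases hx with rfl | rfl
      · exact h1C
      · exact hnC
    have hcard2 : ({1, n} : Finset ℕ).card = 2 := by
      rw [Finset.card_insert_of_notMem (by simp [h1n]), Finset.card_singleton]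
    obtain ⟨w, hw⟩ : ∃ w, (Iv n \ f.2) \ {1, n} = {w} := by
      apply Finset.card_eq_one.1
      rw [Finset.card_sdiff_of_subset hsub, hC3, hcard2]
    have hwmem : w ∈ (Iv n \ f.2) \ ({1, n} : Finset ℕ) := hw ▸ Finset.mem_singleton_self w
    have hwC : w ∈ Iv n \ f.2 := (Finset.mem_sdiff.1 hwmem).1
    have hw1n : w ≠ 1 ∧ w ≠ n := by
      have h' := (Finset.mem_sdiff.1 hwmem).2
      simp only [Finset.mem_insert, Finset.mem_singleton] at h'
      push_neg at h'
      exact h'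
    have hwIv := mem_Iv.1 (Finset.mem_sdiff.1 hwC).1
    have hCeq : ({1, w, n} : Finset ℕ) = Iv n \ f.2 := by
      apply Finset.eq_of_subset_of_card_le
      · intro x hx
        simp only [Finset.mem_insert, Finset.mem_singleton] at hx
        rcases hx with rfl | rfl | rfl
        · exact h1C
        · exact hwC
        · exact hnC
      · rw [hC3]
        have hc3 : ({1, w, n} : Finset ℕ).card = 3 := by
          rw [Finset.card_insert_of_notMem (by simp [Ne.symm hw1n.1, h1n]),
            Finset.card_insert_of_notMem (by simp [hw1n.2]), Finset.card_singleton]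
        omega
    have hf2 : f.2 = Iv n \ ({1, w, n} : Finset ℕ) := by
      rw [hCeq, Finset.sdiff_sdiff_eq_self hBIv]
    have haIv := mem_Iv.1 (hBIv haB)
    have ha1 : a ≠ 1 := fun h => h1f (h ▸ haB)
    have han : a ≠ n := fun h => (HC1 f hf h1f) (h ▸ haB)
    have haU : a ∈ U := by
      rw [hU]
      simp only [Finset.mem_Icc]
      omega
    have hwU : w ∈ U := by
      rw [hU]
      simp only [Finset.mem_Icc]
      omega
    have hfeq : f = (({a} : Finset ℕ), Iv n \ {1, w, n}) := Prod.ext ha hf2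
    refine ⟨a, w, haU, ?_, hfeq⟩
    rw [hWdef]
    simp only [Finset.mem_filter]
    exact ⟨hwU, hfeq ▸ hf⟩
  set Fbad := F.filter (fun f => 1 ∉ f.2) with hFbad
  have hFbadEq : Fbad = U.biUnion
      (fun a => (W a).image (fun w => (({a} : Finset ℕ), Iv n \ {1, w, n}))) := by
    ext f
    simp only [hFbad, Finset.mem_filter, Finset.mem_biUnion, Finset.mem_image]
    constructor
    · rintro ⟨hf, h1f⟩
      obtain ⟨a, w, haU, hwW, hfeq⟩ := hstruct f hf h1f
      exact ⟨a, haU, w, hwW, hfeq.symm⟩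
    · rintro ⟨a, haU, w, hwW, hfeq⟩
      subst hfeq
      refine ⟨(Finset.mem_filter.1 hwW).2, ?_⟩
      simp
  have hWU : ∀ a w, w ∈ W a → w ∈ U := by
    intro a w hw
    exact Finset.mem_of_mem_filter w hw
  have hWne : ∀ a w, w ∈ W a → w ≠ a := by
    intro a w hw hwa
    have hmem := (Finset.mem_filter.1 hw).2
    have h' := (hflags _ hmem).1 (Finset.mem_singleton_self a)
    rw [hwa] at hmem h'
    simp at h'
  have hWsub : ∀ a ∈ U, W a ⊆ U.erase a := by
    intro a _ w hw
    exact Finset.mem_erase.2 ⟨hWne a w hw, hWU a w hw⟩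
  have hFbadCard : Fbad.card = ∑ a ∈ U, (W a).card := by
    rw [hFbadEq, Finset.card_biUnion]
    · refine Finset.sum_congr rfl (fun a haU => ?_)
      apply Finset.card_image_of_injOn
      intro w hw w' hw' hEq
      have h2 : Iv n \ ({1, w, n} : Finset ℕ) = Iv n \ {1, w', n} := congrArg Prod.snd hEq
      by_contra hne'
      have hwU' : w ∈ U := hWU a w hw
      have hwb : 2 ≤ w ∧ w ≤ n - 1 := by
        rw [hU] at hwU'
        simpa using hwU'
      have hmm : w ∈ Iv n \ ({1, w', n} : Finset ℕ) := by
        simp only [Finset.mem_sdiff, Finset.mem_insert, Finset.mem_singleton]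
        exact ⟨mem_Iv.2 ⟨by omega, by omega⟩, by push_neg; exact ⟨by omega, hne', by omega⟩⟩
      rw [← h2] at hmm
      simp at hmm
    · intro a ha a' ha' hne'
      rw [Function.onFun, Finset.disjoint_left]
      intro f hf hf'
      obtain ⟨w, _, hfeq⟩ := Finset.mem_image.1 hf
      obtain ⟨w', _, hfeq'⟩ := Finset.mem_image.1 hf'
      have h1 : ({a} : Finset ℕ) = {a'} :=
        (congrArg Prod.fst hfeq).trans (congrArg Prod.fst hfeq').symm
      exact hne' (Finset.singleton_injective h1)
  -- killed stars
  set K := (Finset.powersetCard 3 U).filter (fun S => ∃ a ∈ S, ∃ w ∈ W a, w ∉ S) with hK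
  have hUsubIv : U ⊆ (Iv n).erase 1 := by
    intro x hx
    rw [hU] at hx
    simp only [Finset.mem_Icc] at hx
    exact Finset.mem_erase.2 ⟨by omega, mem_Iv.2 ⟨by omega, by omega⟩⟩
  have hKnotF : ∀ S ∈ K, (({1} : Finset ℕ), Iv n \ S) ∉ F := by
    intro S hS hmem
    obtain ⟨hSP, a, haS, w, hwW, hwS⟩ := by
      simpa only [hK, Finset.mem_filter] using hS
    obtain ⟨hSsub, hScard⟩ := Finset.mem_powersetCard.1 hSP
    have hflag2 : (({a} : Finset ℕ), Iv n \ {1, w, n}) ∈ F := (Finset.mem_filter.1 hwW).2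
    refine hindep _ hflag2 _ hmem ⟨?_, ?_, ?_⟩
    · ext x
      simp only [Finset.mem_union, Finset.mem_sdiff]
      constructor
      · rintro (⟨h, _⟩ | ⟨h, _⟩) <;> exact h
      · intro hx
        by_cases hxS : x ∈ S
        · refine Or.inl ⟨hx, ?_⟩
          have hxU : x ∈ U := hSsub hxS
          have hxb : 2 ≤ x ∧ x ≤ n - 1 := by
            rw [hU] at hxU
            simpa using hxU
          have hxw : x ≠ w := fun h => hwS (h ▸ hxS)
          simp only [Finset.mem_insert, Finset.mem_singleton]
          push_neg
          exact ⟨by omega, hxw, by omega⟩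
        · exact Or.inr ⟨hx, hxS⟩
    · exact Finset.singleton_inter_of_notMem (by simp [haS])
    · exact Finset.singleton_inter_of_notMem (by simp)
  -- Hit and E
  set Hit := (Finset.powersetCard 3 U).filter (fun S => ∃ a ∈ S, (W a).Nonempty) with hHit
  set E := (Finset.powersetCard 3 U).filter
    (fun S => (∃ a ∈ S, (W a).Nonempty) ∧ ∀ a ∈ S, W a ⊆ S) with hE
  have hHitsub : Hit ⊆ K ∪ E := by
    intro S hS
    obtain ⟨hSP, hex⟩ := Finset.mem_filter.1 hS
    by_cases h : ∃ a ∈ S, ∃ w ∈ W a, w ∉ S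
    · exact Finset.mem_union_left _ (Finset.mem_filter.2 ⟨hSP, h⟩)
    · push_neg at h
      exact Finset.mem_union_right _
        (Finset.mem_filter.2 ⟨hSP, hex, fun a haS w hw => h a haS w hw⟩)
  have hHitCard := hit_count U (fun a => (W a).Nonempty)
  rw [← hHit] at hHitCard
  have hAU : A ⊆ U := Finset.filter_subset _ _
  have hAcomp := Finset.card_filter_add_card_filter_not
    (s := U) (p := fun a => (W a).Nonempty)
  rw [← hA] at hAcomp
  -- per-owner bound
  have hperA : ∀ a ∈ A, (W a).card + (E.filter (fun S => a ∈ S ∧ (W a).Nonempty ∧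
      ∀ b ∈ S, (W b).Nonempty → a ≤ b)).card ≤ n - 3 := by
    intro a haA
    have haU : a ∈ U := hAU haA
    have haW : (W a).Nonempty := (Finset.mem_filter.1 haA).2
    have haWa : a ∉ W a := fun h => (hWne a a h) rfl
    have hWcard : (W a).card ≤ n - 3 := by
      have h' := Finset.card_le_card (hWsub a haU)
      rw [Finset.card_erase_of_mem haU, hUcard] at h'
      omega
    set Ea := E.filter (fun S => a ∈ S ∧ (W a).Nonempty ∧
      ∀ b ∈ S, (W b).Nonempty → a ≤ b) with hEa
    have hEaProp : ∀ S ∈ Ea, a ∈ S ∧ W a ⊆ S ∧ S.card = 3 ∧ S ⊆ U := by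
      intro S hS
      obtain ⟨hSE, haS, _, _⟩ := Finset.mem_filter.1 hS
      obtain ⟨hSP, _, hsubW⟩ := Finset.mem_filter.1 hSE
      obtain ⟨hSsub, hScard⟩ := Finset.mem_powersetCard.1 hSP
      exact ⟨haS, hsubW a haS, hScard, hSsub⟩
    have hXcard : (insert a (W a)).card = (W a).card + 1 :=
      Finset.card_insert_of_notMem haWa
    have hXU : insert a (W a) ⊆ U := Finset.insert_subset haU
      ((hWsub a haU).trans (Finset.erase_subset _ _))
    rcases Nat.lt_or_ge 2 (W a).card with hbig | hsmall
    · -- |W a| ≥ 3 : Ea empty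
      have hEae : Ea = ∅ := by
        apply Finset.eq_empty_of_forall_notMem
        intro S hS
        obtain ⟨haS, hWS, hScard, _⟩ := hEaProp S hS
        have h' := Finset.card_le_card (Finset.insert_subset haS hWS)
        rw [hXcard] at h'
        omega
      rw [hEae]
      simpa using hWcard
    · rcases Nat.lt_or_ge 1 (W a).card with h2 | h1
      · -- |W a| = 2
        have hWa2 : (W a).card = 2 := by omega
        have hEas : Ea ⊆ {insert a (W a)} := by
          intro S hS
          obtain ⟨haS, hWS, hScard, _⟩ := hEaProp S hS
          have heq : insert a (W a) = S := by
            apply Finset.eq_of_subset_of_card_le (Finset.insert_subset haS hWS)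
            rw [hXcard, hWa2, hScard]
          simp [← heq]
        have h' := Finset.card_le_card hEas
        simp only [Finset.card_singleton] at h'
        omega
      · -- |W a| = 1
        have hWa1 : (W a).card = 1 := by
          have := Finset.card_pos.2 haW
          omega
        have hX2 : (insert a (W a)).card = 2 := by omega
        have hEas : Ea ⊆ (U \ insert a (W a)).image
            (fun t => insert t (insert a (W a))) := by
          intro S hS
          obtain ⟨haS, hWS, hScard, hSU⟩ := hEaProp S hS
          have hXS : insert a (W a) ⊆ S := Finset.insert_subset haS hWS
          obtain ⟨t, ht⟩ : ∃ t, S \ insert a (W a) = {t} := by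
            apply Finset.card_eq_one.1
            rw [Finset.card_sdiff_of_subset hXS, hScard, hX2]
          have htm : t ∈ S \ insert a (W a) := ht ▸ Finset.mem_singleton_self t
          have htS : t ∈ S := (Finset.mem_sdiff.1 htm).1
          have htX : t ∉ insert a (W a) := (Finset.mem_sdiff.1 htm).2
          refine Finset.mem_image.2 ⟨t, Finset.mem_sdiff.2 ⟨hSU htS, htX⟩, ?_⟩
          apply Finset.eq_of_subset_of_card_le (Finset.insert_subset htS hXS)
          rw [Finset.card_insert_of_notMem htX, hX2, hScard]
        have h' := (Finset.card_le_card hEas).trans Finset.card_image_le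
        have hUX : (U \ insert a (W a)).card = n - 4 := by
          rw [Finset.card_sdiff_of_subset hXU, hUcard, hX2]
          omega
        omega
  -- sums
  have hsum1 : ∑ a ∈ U, (W a).card = ∑ a ∈ A, (W a).card := by
    symm
    apply Finset.sum_subset hAU
    intro a haU hnaA
    have : ¬ (W a).Nonempty := by
      intro hcon
      exact hnaA (Finset.mem_filter.2 ⟨haU, hcon⟩)
    rw [Finset.not_nonempty_iff_eq_empty.1 this]
    simp
  have hEcard : E.card ≤ ∑ a ∈ A, (E.filter (fun S => a ∈ S ∧ (W a).Nonempty ∧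
      ∀ b ∈ S, (W b).Nonempty → a ≤ b)).card := by
    refine le_trans (Finset.card_le_card ?_) Finset.card_biUnion_le
    intro S hS
    have hSmem := hS
    obtain ⟨hSP, ⟨a0, ha0S, ha0W⟩, hallsub⟩ := Finset.mem_filter.1 hS
    have hSsub : S ⊆ U := (Finset.mem_powersetCard.1 hSP).1
    set SA := S.filter (fun b => (W b).Nonempty) with hSA
    have hSAne : SA.Nonempty := ⟨a0, Finset.mem_filter.2 ⟨ha0S, ha0W⟩⟩
    set am := SA.min' hSAne with ham
    have hamSA := SA.min'_mem hSAne
    obtain ⟨hamS, hamW⟩ := Finset.mem_filter.1 hamSA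
    refine Finset.mem_biUnion.2 ⟨am, Finset.mem_filter.2 ⟨hSsub hamS, hamW⟩,
      Finset.mem_filter.2 ⟨hSmem, hamS, hamW, ?_⟩⟩
    intro b hbS hbW
    exact SA.min'_le b (Finset.mem_filter.2 ⟨hbS, hbW⟩)
  have htotal : Fbad.card + E.card ≤ A.card * (n - 3) := by
    have h1 : Fbad.card + E.card ≤ ∑ a ∈ A, ((W a).card +
        (E.filter (fun S => a ∈ S ∧ (W a).Nonempty ∧
          ∀ b ∈ S, (W b).Nonempty → a ≤ b)).card) := by
      rw [Finset.sum_add_distrib]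
      exact Nat.add_le_add (le_of_eq (hFbadCard.trans hsum1)) hEcard
    have h2 := Finset.sum_le_sum hperA
    rw [Finset.sum_const, smul_eq_mul] at h2
    omega
  -- k bounds
  have hk1 : 1 ≤ A.card := by
    obtain ⟨f, hf, h1f⟩ := hne
    obtain ⟨a, w, haU, hwW, _⟩ := hstruct f hf h1f
    have : a ∈ A := Finset.mem_filter.2 ⟨haU, ⟨w, hwW⟩⟩
    have := Finset.card_pos.2 ⟨a, this⟩
    omega
  have hk2 : A.card ≤ n - 2 := by
    have := Finset.card_le_card hAU
    omega
  have hmaster := masterI hn hk1 hk2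
  -- conclude
  have hKHit : Hit.card ≤ K.card + E.card :=
    le_trans (Finset.card_le_card hHitsub) (Finset.card_union_le _ _)
  have hfc : (U.filter (fun a => ¬ (W a).Nonempty)).card = n - 2 - A.card := by omega
  rw [hfc, hUcard] at hHitCard
  have hPE : Fbad.card + E.card + Nat.choose (n - 2 - A.card) 3 < Nat.choose (n-2) 3 :=
    lt_of_le_of_lt (Nat.add_le_add_right htotal _)
      (by rw [Nat.add_comm]; exact hmaster)
  have hfinal : Fbad.card < K.card := by omega
  refine finisher hn hflags hindep hmax K ?_ hKnotF hfinal
  intro S hS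
  obtain ⟨hSP, _⟩ := Finset.mem_filter.1 hS
  obtain ⟨hSsub, hScard⟩ := Finset.mem_powersetCard.1 hSP
  exact ⟨hSsub.trans hUsubIv, hScard⟩

/-- Case II: all bad complements are contained in `{1, n-2, n-1, n}`. -/
lemma countII (hn : 11 ≤ n) (hflags : ∀ f ∈ F, IsFlag n 1 (n-3) f)
    (hindep : Indep n F) (hls : LeftShiftedP n F)
    (hmax : ∀ G : Finset (Finset ℕ × Finset ℕ),
      (∀ g ∈ G, IsFlag n 1 (n-3) g) → Indep n G → G.card ≤ F.card)
    (HC2 : ∀ f ∈ F, 1 ∉ f.2 → Iv n \ f.2 ⊆ {1, n-2, n-1, n})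
    (hne : ∃ f ∈ F, 1 ∉ f.2) : False := by
  classical
  set T := ({n-2, n-1, n} : Finset ℕ) with hT
  set U2 := Finset.Icc 2 (n-3) with hU2
  have hTcard : T.card = 3 := by
    rw [hT, Finset.card_insert_of_notMem (by simp; omega),
      Finset.card_insert_of_notMem (by simp; omega), Finset.card_singleton]
  have hU2card : U2.card = n - 4 := by rw [hU2, Nat.card_Icc]; omega
  have hU2T : ∀ x ∈ U2, x ∉ T := by
    intro x hx
    rw [hU2] at hx
    simp only [Finset.mem_Icc] at hx
    rw [hT]
    simp only [Finset.mem_insert, Finset.mem_singleton]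
    omega
  have hTmem : ∀ x ∈ T, 2 ≤ x ∧ x ≤ n := by
    intro x hx
    rw [hT] at hx
    simp only [Finset.mem_insert, Finset.mem_singleton] at hx
    omega
  set V : ℕ → Finset (Finset ℕ) :=
    fun a => (Finset.powersetCard 2 T).filter
      (fun P => (({a} : Finset ℕ), Iv n \ insert 1 P) ∈ F) with hVdef
  -- structure of bad flags
  have hstruct : ∀ f ∈ F, 1 ∉ f.2 →
      ∃ a P, a ∈ Finset.Icc 2 n ∧ P ∈ V a ∧ f = (({a} : Finset ℕ), Iv n \ insert 1 P) := by
    intro f hf h1f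
    obtain ⟨hAB, hBIv, hA1, hB⟩ := hflags f hf
    obtain ⟨a, ha⟩ := Finset.card_eq_one.1 hA1
    have haB : a ∈ f.2 := hAB (ha ▸ Finset.mem_singleton_self a)
    have hC3 : (Iv n \ f.2).card = 3 := by
      rw [Finset.card_sdiff_of_subset hBIv, card_Iv, hB]; omega
    have h1C : 1 ∈ Iv n \ f.2 :=
      Finset.mem_sdiff.2 ⟨mem_Iv.2 ⟨le_refl 1, by omega⟩, h1f⟩
    have hCsub := HC2 f hf h1f
    have hPsubT : (Iv n \ f.2).erase 1 ⊆ T := by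
      intro x hx
      obtain ⟨hx1, hxC⟩ := Finset.mem_erase.1 hx
      have h' := hCsub hxC
      rcases Finset.mem_insert.1 h' with h'' | h''
      · exact absurd h'' hx1
      · exact h''
    have hP2 : ((Iv n \ f.2).erase 1).card = 2 := by
      rw [Finset.card_erase_of_mem h1C, hC3]
    have hCeq : insert 1 ((Iv n \ f.2).erase 1) = Iv n \ f.2 := Finset.insert_erase h1C
    have hf2 : f.2 = Iv n \ insert 1 ((Iv n \ f.2).erase 1) := by
      rw [hCeq, Finset.sdiff_sdiff_eq_self hBIv]
    have haIv := mem_Iv.1 (hBIv haB)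
    have ha1 : a ≠ 1 := fun h => h1f (h ▸ haB)
    have hfeq : f = (({a} : Finset ℕ), Iv n \ insert 1 ((Iv n \ f.2).erase 1)) :=
      Prod.ext ha hf2
    refine ⟨a, (Iv n \ f.2).erase 1, by simp only [Finset.mem_Icc]; omega, ?_, hfeq⟩
    rw [hVdef]
    simp only [Finset.mem_filter]
    exact ⟨Finset.mem_powersetCard.2 ⟨hPsubT, hP2⟩, hfeq ▸ hf⟩
  -- owners in T have a unique support
  have hVa_T : ∀ a ∈ T, ∀ P ∈ V a, P = T.erase a := by
    intro a haT P hP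
    obtain ⟨hPP, hPF⟩ := Finset.mem_filter.1 hP
    obtain ⟨hPsub, hPcard⟩ := Finset.mem_powersetCard.1 hPP
    have haP : a ∉ P := by
      intro haP
      have h' := (hflags _ hPF).1 (Finset.mem_singleton_self a)
      simp only [Finset.mem_sdiff, Finset.mem_insert] at h'
      exact h'.2 (Or.inr haP)
    have hsub : P ⊆ T.erase a := fun x hx => Finset.mem_erase.2
      ⟨fun h => haP (h ▸ hx), hPsub hx⟩
    apply Finset.eq_of_subset_of_card_le hsub
    rw [Finset.card_erase_of_mem haT, hTcard, hPcard]
  set Fbad := F.filter (fun f => 1 ∉ f.2) with hFbad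
  have hU3eq : Finset.Icc 2 n = U2 ∪ T := by
    ext x
    rw [hU2, hT]
    simp only [Finset.mem_Icc, Finset.mem_union, Finset.mem_insert, Finset.mem_singleton]
    omega
  have hinj2 : ∀ (a : ℕ) (P P' : Finset ℕ), P ∈ V a → P' ∈ V a →
      Iv n \ insert 1 P = Iv n \ insert 1 P' → P = P' := by
    intro a P P' hP hP' hEq
    have hPsub : P ⊆ T := (Finset.mem_powersetCard.1 (Finset.mem_filter.1 hP).1).1
    have hP'sub : P' ⊆ T := (Finset.mem_powersetCard.1 (Finset.mem_filter.1 hP').1).1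
    have h1P : (1:ℕ) ∉ P := fun h => by have := hTmem 1 (hPsub h); omega
    have h1P' : (1:ℕ) ∉ P' := fun h => by have := hTmem 1 (hP'sub h); omega
    have hPIv : insert 1 P ⊆ Iv n := by
      refine Finset.insert_subset (mem_Iv.2 ⟨le_refl 1, by omega⟩) ?_
      intro x hx
      have := hTmem x (hPsub hx)
      exact mem_Iv.2 ⟨by omega, this.2⟩
    have hP'Iv : insert 1 P' ⊆ Iv n := by
      refine Finset.insert_subset (mem_Iv.2 ⟨le_refl 1, by omega⟩) ?_
      intro x hx
      have := hTmem x (hP'sub hx)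
      exact mem_Iv.2 ⟨by omega, this.2⟩
    have h2 := congrArg (fun t => Iv n \ t) hEq
    simp only [Finset.sdiff_sdiff_eq_self hPIv, Finset.sdiff_sdiff_eq_self hP'Iv] at h2
    have := congrArg (fun t => Finset.erase t 1) h2
    simpa [Finset.erase_insert h1P, Finset.erase_insert h1P'] using this
  have hFbadEq : Fbad = (Finset.Icc 2 n).biUnion
      (fun a => (V a).image (fun P => (({a} : Finset ℕ), Iv n \ insert 1 P))) := by
    ext f
    simp only [hFbad, Finset.mem_filter, Finset.mem_biUnion, Finset.mem_image]
    constructor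
    · rintro ⟨hf, h1f⟩
      obtain ⟨a, P, haU, hPV, hfeq⟩ := hstruct f hf h1f
      exact ⟨a, haU, P, hPV, hfeq.symm⟩
    · rintro ⟨a, haU, P, hPV, hfeq⟩
      subst hfeq
      refine ⟨(Finset.mem_filter.1 hPV).2, ?_⟩
      simp
  have hFbadCard : Fbad.card = ∑ a ∈ Finset.Icc 2 n, (V a).card := by
    rw [hFbadEq, Finset.card_biUnion]
    · exact Finset.sum_congr rfl (fun a haU => Finset.card_image_of_injOn
        (fun P hP P' hP' hEq => hinj2 a P P' hP hP' (congrArg Prod.snd hEq)))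
    · intro a ha a' ha' hne'
      rw [Function.onFun, Finset.disjoint_left]
      intro f hf hf'
      obtain ⟨P, _, hfeq⟩ := Finset.mem_image.1 hf
      obtain ⟨P', _, hfeq'⟩ := Finset.mem_image.1 hf'
      have h1 : ({a} : Finset ℕ) = {a'} :=
        (congrArg Prod.fst hfeq).trans (congrArg Prod.fst hfeq').symm
      exact hne' (Finset.singleton_injective h1)
  set A1 := U2.filter (fun a => (V a).Nonempty) with hA1
  set A2 := T.filter (fun a => (V a).Nonempty) with hA2
  -- bound on Fbad.card
  have hV3 : ∀ a, (V a).card ≤ 3 := by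
    intro a
    have h' := Finset.card_le_card (Finset.filter_subset
      (fun P => (({a} : Finset ℕ), Iv n \ insert 1 P) ∈ F) (Finset.powersetCard 2 T))
    rw [Finset.card_powersetCard, hTcard] at h'
    exact h'
  have hVT1 : ∀ a ∈ T, (V a).card ≤ 1 := by
    intro a haT
    have hsub : V a ⊆ {T.erase a} := by
      intro P hP
      simp [hVa_T a haT P hP]
    simpa using Finset.card_le_card hsub
  have hsumU2 : ∑ a ∈ U2, (V a).card ≤ 3 * A1.card := by
    have h1 : ∑ a ∈ U2, (V a).card = ∑ a ∈ A1, (V a).card := by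
      symm
      apply Finset.sum_subset (Finset.filter_subset _ _)
      intro a haU hnaA
      have : ¬ (V a).Nonempty := fun hcon => hnaA (Finset.mem_filter.2 ⟨haU, hcon⟩)
      rw [Finset.not_nonempty_iff_eq_empty.1 this]
      simp
    rw [h1]
    calc ∑ a ∈ A1, (V a).card ≤ ∑ _a ∈ A1, 3 := Finset.sum_le_sum (fun a _ => hV3 a)
      _ = 3 * A1.card := by rw [Finset.sum_const, smul_eq_mul]; ring
  have hsumT : ∑ a ∈ T, (V a).card ≤ A2.card := by
    have h1 : ∑ a ∈ T, (V a).card = ∑ a ∈ A2, (V a).card := by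
      symm
      apply Finset.sum_subset (Finset.filter_subset _ _)
      intro a haU hnaA
      have : ¬ (V a).Nonempty := fun hcon => hnaA (Finset.mem_filter.2 ⟨haU, hcon⟩)
      rw [Finset.not_nonempty_iff_eq_empty.1 this]
      simp
    rw [h1]
    calc ∑ a ∈ A2, (V a).card ≤ ∑ _a ∈ A2, 1 :=
          Finset.sum_le_sum (fun a ha => hVT1 a (Finset.mem_of_mem_filter a ha))
      _ = A2.card := by rw [Finset.sum_const, smul_eq_mul]; ring
  have hdisjU2T : Disjoint U2 T := by
    rw [Finset.disjoint_left]
    exact fun x hx => hU2T x hx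
  have hFbadBound : Fbad.card ≤ 3 * A1.card + A2.card := by
    rw [hFbadCard, hU3eq, Finset.sum_union hdisjU2T]
    omega
  -- killed sets
  set K1 := (Finset.powersetCard 3 U2).filter (fun S => ∃ a ∈ S, (V a).Nonempty) with hK1
  set K2 := A2.biUnion (fun a => (Finset.powersetCard 2 U2).image (fun D => insert a D))
    with hK2
  have hU2b : ∀ x ∈ U2, 2 ≤ x ∧ x ≤ n - 3 := by
    intro x hx
    rw [hU2] at hx
    simpa using hx
  -- stars killed by K1
  have hK1notF : ∀ S ∈ K1, (({1} : Finset ℕ), Iv n \ S) ∉ F := by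
    intro S hS hmem
    obtain ⟨hSP, a, haS, P, hPV⟩ := by
      simpa only [hK1, Finset.mem_filter] using hS
    obtain ⟨hSsub, hScard⟩ := Finset.mem_powersetCard.1 hSP
    have hflag2 : (({a} : Finset ℕ), Iv n \ insert 1 P) ∈ F := (Finset.mem_filter.1 hPV).2
    have hPsub : P ⊆ T := (Finset.mem_powersetCard.1 (Finset.mem_filter.1 hPV).1).1
    refine hindep _ hflag2 _ hmem ⟨?_, ?_, ?_⟩
    · ext x
      simp only [Finset.mem_union, Finset.mem_sdiff]
      constructor
      · rintro (⟨h, _⟩ | ⟨h, _⟩) <;> exact h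
      · intro hx
        by_cases hxS : x ∈ S
        · refine Or.inl ⟨hx, ?_⟩
          have hxb := hU2b x (hSsub hxS)
          simp only [Finset.mem_insert]
          push_neg
          refine ⟨by omega, fun hxP => ?_⟩
          have := hTmem x (hPsub hxP)
          have := hU2T x (hSsub hxS)
          exact this (hPsub hxP)
        · exact Or.inr ⟨hx, hxS⟩
    · exact Finset.singleton_inter_of_notMem (by simp [haS])
    · exact Finset.singleton_inter_of_notMem (by simp)
  have hK2notF : ∀ S ∈ K2, (({1} : Finset ℕ), Iv n \ S) ∉ F := by
    intro S hS hmem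
    obtain ⟨a, haA2, hSim⟩ := Finset.mem_biUnion.1 hS
    obtain ⟨D, hD, hSeq⟩ := Finset.mem_image.1 hSim
    obtain ⟨hDsub, hDcard⟩ := Finset.mem_powersetCard.1 hD
    have haT : a ∈ T := Finset.mem_of_mem_filter a haA2
    obtain ⟨P, hPV⟩ := (Finset.mem_filter.1 haA2).2
    have hPeq : P = T.erase a := hVa_T a haT P hPV
    have hflag2 : (({a} : Finset ℕ), Iv n \ insert 1 P) ∈ F := (Finset.mem_filter.1 hPV).2
    refine hindep _ hflag2 _ hmem ⟨?_, ?_, ?_⟩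
    · ext x
      simp only [Finset.mem_union, Finset.mem_sdiff]
      constructor
      · rintro (⟨h, _⟩ | ⟨h, _⟩) <;> exact h
      · intro hx
        by_cases hxS : x ∈ S
        · refine Or.inl ⟨hx, ?_⟩
          rw [← hSeq] at hxS
          simp only [Finset.mem_insert]
          push_neg
          rcases Finset.mem_insert.1 hxS with rfl | hxD
          · refine ⟨by have := hTmem x haT; omega, ?_⟩
            rw [hPeq]
            exact fun h => (Finset.mem_erase.1 h).1 rfl
          · have hxb := hU2b x (hDsub hxD)
            refine ⟨by omega, fun hxP => ?_⟩
            exact hU2T x (hDsub hxD) (Finset.mem_of_mem_erase (hPeq ▸ hxP))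
        · exact Or.inr ⟨hx, hxS⟩
    · refine Finset.singleton_inter_of_notMem ?_
      simp only [Finset.mem_sdiff, not_and, not_not]
      intro _
      rw [← hSeq]
      exact Finset.mem_insert_self a D
    · exact Finset.singleton_inter_of_notMem (by simp)
  -- cards of K1, K2
  have hK1Card := hit_count U2 (fun a => (V a).Nonempty)
  rw [← hK1] at hK1Card
  have hA1comp := Finset.card_filter_add_card_filter_not
    (s := U2) (p := fun a => (V a).Nonempty)
  rw [← hA1] at hA1comp
  have hfc2 : (U2.filter (fun a => ¬ (V a).Nonempty)).card = n - 4 - A1.card := by omega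
  rw [hfc2, hU2card] at hK1Card
  have hK2Card : K2.card = A2.card * Nat.choose (n-4) 2 := by
    rw [hK2, Finset.card_biUnion]
    · have : ∀ a ∈ A2, ((Finset.powersetCard 2 U2).image (fun D => insert a D)).card
          = Nat.choose (n-4) 2 := by
        intro a haA2
        have haT : a ∈ T := Finset.mem_of_mem_filter a haA2
        rw [Finset.card_image_of_injOn, Finset.card_powersetCard, hU2card]
        intro D hDm D' hD'm hEq
        have hDsub : D ⊆ U2 := (Finset.mem_powersetCard.1 hDm).1
        have hD'sub : D' ⊆ U2 := (Finset.mem_powersetCard.1 hD'm).1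
        have haD : a ∉ D := fun h => hU2T a (hDsub h) haT
        have haD' : a ∉ D' := fun h => hU2T a (hD'sub h) haT
        have := congrArg (fun t => Finset.erase t a) hEq
        simpa [Finset.erase_insert haD, Finset.erase_insert haD'] using this
      rw [Finset.sum_congr rfl this, Finset.sum_const, smul_eq_mul]
    · intro a ha a' ha' hne'
      rw [Function.onFun, Finset.disjoint_left]
      intro S hSa hSa'
      obtain ⟨D, hD, hSeq⟩ := Finset.mem_image.1 hSa
      obtain ⟨D', hD', hSeq'⟩ := Finset.mem_image.1 hSa'
      have haT : a ∈ T := Finset.mem_of_mem_filter a ha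
      have haS : a ∈ S := hSeq ▸ Finset.mem_insert_self a D
      rw [← hSeq'] at haS
      rcases Finset.mem_insert.1 haS with h | h
      · exact hne' h
      · exact hU2T a ((Finset.mem_powersetCard.1 hD').1 h) haT
  have hKdisj : Disjoint K1 K2 := by
    rw [Finset.disjoint_left]
    intro S hS1 hS2
    obtain ⟨hSP, _⟩ := Finset.mem_filter.1 hS1
    have hSsub : S ⊆ U2 := (Finset.mem_powersetCard.1 hSP).1
    obtain ⟨a, haA2, hSim⟩ := Finset.mem_biUnion.1 hS2
    obtain ⟨D, _, hSeq⟩ := Finset.mem_image.1 hSim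
    have haT : a ∈ T := Finset.mem_of_mem_filter a haA2
    have haS : a ∈ S := hSeq ▸ Finset.mem_insert_self a D
    exact hU2T a (hSsub haS) haT
  -- k' bounds and nonemptiness
  have hA1U : A1 ⊆ U2 := Finset.filter_subset _ _
  have hk2' : A1.card ≤ n - 4 := by
    have := Finset.card_le_card hA1U
    omega
  have hNon : 1 ≤ A1.card ∨ 1 ≤ A2.card := by
    obtain ⟨f, hf, h1f⟩ := hne
    obtain ⟨a, P, haU, hPV, _⟩ := hstruct f hf h1f
    rw [hU3eq] at haU
    rcases Finset.mem_union.1 haU with h | h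
    · left
      have : a ∈ A1 := Finset.mem_filter.2 ⟨h, ⟨P, hPV⟩⟩
      have := Finset.card_pos.2 ⟨a, this⟩
      omega
    · right
      have : a ∈ A2 := Finset.mem_filter.2 ⟨h, ⟨P, hPV⟩⟩
      have := Finset.card_pos.2 ⟨a, this⟩
      omega
  have hc2 := choose2_ge hn
  have hk2le : A2.card ≤ K2.card := by
    rw [hK2Card]
    calc A2.card = A2.card * 1 := by ring
      _ ≤ A2.card * Nat.choose (n-4) 2 := Nat.mul_le_mul_left _ (by omega)
  have hfinal : Fbad.card < (K1 ∪ K2).card := by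
    rw [Finset.card_union_of_disjoint hKdisj]
    rcases Nat.eq_zero_or_pos A1.card with hz | hpos
    · -- all owners in T
      have hzero : ∑ a ∈ U2, (V a).card = 0 := by
        have h' := hsumU2
        omega
      have hk2pos : 1 ≤ A2.card := by
        rcases hNon with h | h
        · omega
        · exact h
      have hFb : Fbad.card ≤ A2.card := by
        rw [hFbadCard, hU3eq, Finset.sum_union hdisjU2T]
        omega
      have hstrict : A2.card < K2.card := by
        rw [hK2Card]
        calc A2.card < A2.card * 2 := by omega
          _ ≤ A2.card * Nat.choose (n-4) 2 := Nat.mul_le_mul_left _ hc2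
      omega
    · have hmaster := masterII hn hpos hk2'
      have hK1big : 3 * A1.card < K1.card := by
        have h3 : A1.card * 3 = 3 * A1.card := by ring
        omega
      omega
  refine finisher hn hflags hindep hmax (K1 ∪ K2) ?_ ?_ hfinal
  · intro S hS
    rcases Finset.mem_union.1 hS with h | h
    · obtain ⟨hSP, _⟩ := Finset.mem_filter.1 h
      obtain ⟨hSsub, hScard⟩ := Finset.mem_powersetCard.1 hSP
      refine ⟨?_, hScard⟩
      intro x hx
      have := hU2b x (hSsub hx)
      exact Finset.mem_erase.2 ⟨by omega, mem_Iv.2 ⟨by omega, by omega⟩⟩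
    · obtain ⟨a, haA2, hSim⟩ := Finset.mem_biUnion.1 h
      obtain ⟨D, hD, hSeq⟩ := Finset.mem_image.1 hSim
      obtain ⟨hDsub, hDcard⟩ := Finset.mem_powersetCard.1 hD
      have haT : a ∈ T := Finset.mem_of_mem_filter a haA2
      have haD : a ∉ D := fun hh => hU2T a (hDsub hh) haT
      constructor
      · rw [← hSeq]
        intro x hx
        rcases Finset.mem_insert.1 hx with rfl | hxD
        · have := hTmem x haT
          refine Finset.mem_erase.2 ⟨?_, mem_Iv.2 ⟨by omega, by omega⟩⟩
          have hxT := haT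
          rw [hT] at hxT
          simp only [Finset.mem_insert, Finset.mem_singleton] at hxT
          omega
        · have := hU2b x (hDsub hxD)
          exact Finset.mem_erase.2 ⟨by omega, mem_Iv.2 ⟨by omega, by omega⟩⟩
      · rw [← hSeq, Finset.card_insert_of_notMem haD, hDcard]
  · intro S hS
    rcases Finset.mem_union.1 hS with h | h
    · exact hK1notF S h
    · exact hK2notF S h

/-- Every member of `F` is a structured flag. -/
lemma nice_of_mem (hn : 11 ≤ n) (hflags : ∀ f ∈ F, IsFlag n 1 (n-3) f)
    {f : Finset ℕ × Finset ℕ} (hf : f ∈ F) :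
    ∃ a, Nice n F a (Iv n \ f.2) := by
  obtain ⟨hAB, hBIv, hA1, hB⟩ := hflags f hf
  obtain ⟨a, ha⟩ := Finset.card_eq_one.1 hA1
  have haB : a ∈ f.2 := hAB (ha ▸ Finset.mem_singleton_self a)
  refine ⟨a, hBIv haB, by simp [haB], Finset.sdiff_subset, ?_, ?_⟩
  · rw [Finset.card_sdiff_of_subset hBIv, card_Iv, hB]; omega
  · have heq : (({a} : Finset ℕ), Iv n \ (Iv n \ f.2)) = f := by
      rw [Finset.sdiff_sdiff_eq_self hBIv, ← ha]
    rw [heq]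
    exact hf

/-- Main structural result: no bad flags in a maximum left-shifted independent family. -/
lemma no_bad (hn : 11 ≤ n) (hflags : ∀ f ∈ F, IsFlag n 1 (n-3) f)
    (hindep : Indep n F) (hls : LeftShiftedP n F)
    (hmax : ∀ G : Finset (Finset ℕ × Finset ℕ),
      (∀ g ∈ G, IsFlag n 1 (n-3) g) → Indep n G → G.card ≤ F.card) :
    ∀ f ∈ F, 1 ∈ f.2 := by
  by_contra hcon
  push_neg at hcon
  obtain ⟨f₀, hf₀, h1f₀⟩ := hcon
  by_cases hC1 : ∀ f ∈ F, 1 ∉ f.2 → n ∉ f.2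
  · exact countI hn hflags hindep hls hmax hC1 ⟨f₀, hf₀, h1f₀⟩
  · push_neg at hC1
    obtain ⟨g₀, hg₀, h1g₀, hng₀⟩ := hC1
    obtain ⟨a₀, hN₀⟩ := nice_of_mem hn hflags hg₀
    have h1C₀ : 1 ∈ Iv n \ g₀.2 :=
      Finset.mem_sdiff.2 ⟨mem_Iv.2 ⟨le_refl 1, by omega⟩, h1g₀⟩
    have hnC₀ : n ∉ Iv n \ g₀.2 := fun h => (Finset.mem_sdiff.1 h).2 hng₀
    have hTop := lemTop hn hindep hls hN₀ h1C₀ hnC₀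
    have HC2 : ∀ f ∈ F, 1 ∉ f.2 → Iv n \ f.2 ⊆ {1, n-2, n-1, n} := by
      intro f hf h1f
      obtain ⟨a, hN⟩ := nice_of_mem hn hflags hf
      have h1C : 1 ∈ Iv n \ f.2 :=
        Finset.mem_sdiff.2 ⟨mem_Iv.2 ⟨le_refl 1, by omega⟩, h1f⟩
      by_cases hnC : n ∈ Iv n \ f.2
      · intro x hx
        by_contra hxbad
        simp only [Finset.mem_insert, Finset.mem_singleton] at hxbad
        push_neg at hxbad
        obtain ⟨hx1, hx2, hx3, hx4⟩ := hxbad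
        have hxIv := mem_Iv.1 (Finset.mem_sdiff.1 hx).1
        -- C = {1, x, n}
        have hCeq : ({1, x, n} : Finset ℕ) = Iv n \ f.2 := by
          apply Finset.eq_of_subset_of_card_le
          · intro t ht
            simp only [Finset.mem_insert, Finset.mem_singleton] at ht
            rcases ht with rfl | rfl | rfl
            · exact h1C
            · exact hx
            · exact hnC
          · rw [hN.2.2.2.1]
            have hc3 : ({1, x, n} : Finset ℕ).card = 3 := by
              rw [Finset.card_insert_of_notMem (by simp; omega),
                Finset.card_insert_of_notMem (by simp; omega), Finset.card_singleton]
            omega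
        refine lemD hn hindep hls hN hN₀ h1C h1C₀ ?_
        rw [hTop, ← hCeq]
        intro t ht
        obtain ⟨ht1, ht2⟩ := Finset.mem_inter.1 ht
        simp only [Finset.mem_insert, Finset.mem_singleton] at ht1 ht2 ⊢
        omega
      · have := lemTop hn hindep hls hN h1C hnC
        rw [this]
        intro t ht
        simp only [Finset.mem_insert, Finset.mem_singleton] at ht ⊢
        omega
    exact countII hn hflags hindep hls hmax HC2 ⟨f₀, hf₀, h1f₀⟩

end S15

/-- for `n ≥ 11`, in a maximum left-shifted independent set `ℱ` of
flags of type `{1,n−3}`, the singleton `{1}` has weight `C(n−1,3)`; equivalently,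
every flag `(A,B) ∈ ℱ` satisfies `1 ∈ B`. -/
theorem stmt_15 (n : ℕ) (hn : 11 ≤ n)
    (F : Finset (Finset ℕ × Finset ℕ)) (hflags : ∀ f ∈ F, IsFlag n 1 (n - 3) f)
    (hindep : Indep n F) (hls : LeftShiftedP n F)
    (hmax : ∀ G : Finset (Finset ℕ × Finset ℕ),
      (∀ g ∈ G, IsFlag n 1 (n - 3) g) → Indep n G → G.card ≤ F.card) :
    weightA F {1} = Nat.choose (n - 1) 3 ∧ ∀ f ∈ F, 1 ∈ f.2 := by
  classical
  have hall : ∀ f ∈ F, 1 ∈ f.2 := S15.no_bad hn hflags hindep hls hmax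
  refine ⟨?_, hall⟩
  have h1Iv : (1:ℕ) ∈ Iv n := S15.mem_Iv.2 ⟨le_refl 1, by omega⟩
  set Star := (Finset.powersetCard (n-4) ((Iv n).erase 1)).image
    (fun B => (({1} : Finset ℕ), insert 1 B)) with hStar
  have hstarflag : ∀ B ∈ Finset.powersetCard (n-4) ((Iv n).erase 1),
      IsFlag n 1 (n-3) (({1} : Finset ℕ), insert 1 B) := by
    intro B hBm
    obtain ⟨hBsub, hBcard⟩ := Finset.mem_powersetCard.1 hBm
    have h1B : (1:ℕ) ∉ B := fun h => (Finset.mem_erase.1 (hBsub h)).1 rfl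
    refine ⟨by simp, ?_, Finset.card_singleton 1, ?_⟩
    · refine Finset.insert_subset h1Iv ?_
      exact hBsub.trans (Finset.erase_subset _ _)
    · rw [Finset.card_insert_of_notMem h1B, hBcard]
      omega
  have hstarmem : ∀ B ∈ Finset.powersetCard (n-4) ((Iv n).erase 1),
      (({1} : Finset ℕ), insert 1 B) ∈ F := by
    intro B hBm
    by_contra hnot
    set s := (({1} : Finset ℕ), insert 1 B) with hs
    have h1g2 : ∀ h ∈ insert s F, 1 ∈ h.2 := by
      intro h hh
      rcases Finset.mem_insert.1 hh with rfl | hh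
      · exact Finset.mem_insert_self 1 B
      · exact hall h hh
    have hindep' : Indep n (insert s F) := by
      intro f hf g hg hopp
      rcases Finset.mem_insert.1 hf with rfl | hfF
      · have hc := hopp.2.1
        rw [Finset.singleton_inter_of_mem (h1g2 g hg)] at hc
        simp at hc
      · rcases Finset.mem_insert.1 hg with rfl | hgF
        · have hc := hopp.2.2
          rw [Finset.singleton_inter_of_mem (hall f hfF)] at hc
          simp at hc
        · exact hindep f hfF g hgF hopp
    have hflags' : ∀ g ∈ insert s F, IsFlag n 1 (n-3) g := by
      intro g hg
      rcases Finset.mem_insert.1 hg with rfl | hg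
      · exact hstarflag B hBm
      · exact hflags g hg
    have hle := hmax (insert s F) hflags' hindep'
    rw [Finset.card_insert_of_notMem hnot] at hle
    omega
  have hfilter : F.filter (fun f => f.1 = {1}) = Star := by
    ext f
    simp only [Finset.mem_filter, hStar, Finset.mem_image]
    constructor
    · rintro ⟨hf, hf1⟩
      obtain ⟨hAB, hBIv, hA1, hB⟩ := hflags f hf
      have h1B : 1 ∈ f.2 := hAB (hf1 ▸ Finset.mem_singleton_self 1)
      refine ⟨f.2.erase 1, ?_, ?_⟩
      · refine Finset.mem_powersetCard.2 ⟨?_, ?_⟩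
        · intro x hx
          obtain ⟨hx1, hxB⟩ := Finset.mem_erase.1 hx
          exact Finset.mem_erase.2 ⟨hx1, hBIv hxB⟩
        · rw [Finset.card_erase_of_mem h1B, hB]
          omega
      · rw [Finset.insert_erase h1B, ← hf1]
    · rintro ⟨B, hBm, heq⟩
      rw [← heq]
      exact ⟨hstarmem B hBm, rfl⟩
  have hinj : Set.InjOn (fun B => (({1} : Finset ℕ), insert 1 B))
      (↑(Finset.powersetCard (n-4) ((Iv n).erase 1)) : Set (Finset ℕ)) := by
    intro B hB B' hB' hEq
    have h2 : insert 1 B = insert 1 B' := congrArg Prod.snd hEq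
    have h1B : (1:ℕ) ∉ B := fun h =>
      (Finset.mem_erase.1 ((Finset.mem_powersetCard.1 hB).1 h)).1 rfl
    have h1B' : (1:ℕ) ∉ B' := fun h =>
      (Finset.mem_erase.1 ((Finset.mem_powersetCard.1 hB').1 h)).1 rfl
    have h3 := congrArg (fun t => Finset.erase t 1) h2
    simpa [Finset.erase_insert h1B, Finset.erase_insert h1B'] using h3
  rw [weightA, hfilter, hStar, Finset.card_image_of_injOn hinj, Finset.card_powersetCard,
    Finset.card_erase_of_mem h1Iv, S15.card_Iv]
  have h1 : n - 4 = (n-1) - 3 := by omega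
  rw [h1, Nat.choose_symm (by omega)]
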